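/- Let N ≥ 2, ℓ_1,...,ℓ_N > 0, and suppose there exist j ≠ k with ℓ_j/ℓ_k ∈ ℚ. Let τ ∈ (πℤ/ℓ_j) ∩ (πℤ/ℓ_k) be nonzero. Then for every α ∈ ℂ, τ² is an eigenvalue of the Robin star-graph Laplacian H_α, i.e. the matrix A(τℓ, α/τ) is singular; moreover the dimension of its kernel equals (#{i : τℓ_i ∈ πℤ}) − 1, independent of α. -/
import Mathlib


open Complex Finset

/-- If `τ ≠ 0` lies in `(πℤ/ℓ_j) ∩ (πℤ/ℓ_k)` for two distinct edges with
rationally dependent lengths, then the secular matrix `A(τℓ, α/τ)` is singular for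
every `α`, and the dimension of its kernel is `#{i : τ ℓ_i ∈ πℤ} − 1`. -/
theorem dirichlet_eigenvalue_persists (N : ℕ) (hN : 2 ≤ N)
    (ℓ : Fin N → ℝ) (hℓ : ∀ j, 0 < ℓ j)
    (j k : Fin N) (hjk : j ≠ k) (hrat : ∃ q : ℚ, ℓ j / ℓ k = (q : ℝ))
    (τ : ℝ) (hτ : τ ≠ 0)
    (hj : ∃ m : ℤ, τ * ℓ j = m * Real.pi) (hk : ∃ m : ℤ, τ * ℓ k = m * Real.pi)
    (α : ℂ) (A : Matrix (Fin N) (Fin N) ℂ)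
    (hA : ∀ i j' : Fin N, A i j' =
      if (i : ℕ) + 1 < N then
        (if j' = i then Complex.sin ((τ * ℓ i : ℝ) : ℂ)
         else if (j' : ℕ) = (i : ℕ) + 1 then -Complex.sin ((τ * ℓ j' : ℝ) : ℂ) else 0)
      else
        (if (j' : ℕ) + 1 = N then
            Complex.cos ((τ * ℓ j' : ℝ) : ℂ) + (α / (τ : ℂ)) * Complex.sin ((τ * ℓ j' : ℝ) : ℂ)
         else Complex.cos ((τ * ℓ j' : ℝ) : ℂ))) :
    A.det = 0 ∧
    Module.finrank ℂ (LinearMap.ker A.mulVecLin)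
      = (Finset.univ.filter (fun i : Fin N => Real.sin (τ * ℓ i) = 0)).card - 1 := by
  classical
  set η : ℂ := α / (τ : ℂ) with hη
  set s : Fin N → ℂ := fun i => Complex.sin ((τ * ℓ i : ℝ) : ℂ) with hs
  set c : Fin N → ℂ := fun i => Complex.cos ((τ * ℓ i : ℝ) : ℂ) with hc
  set S : Finset (Fin N) := Finset.univ.filter (fun i => Real.sin (τ * ℓ i) = 0) with hSdef
  have hmemS : ∀ i : Fin N, i ∈ S ↔ s i = 0 := by
    intro i
    simp only [hSdef, Finset.mem_filter, Finset.mem_univ, true_and, hs,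
      ← Complex.ofReal_sin, Complex.ofReal_eq_zero]
  have hsin : ∀ i ∈ S, s i = 0 := fun i hi => (hmemS i).mp hi
  have hjS : j ∈ S := by
    obtain ⟨m, hm⟩ := hj
    simp [hSdef, hm, Real.sin_int_mul_pi]
  have hkS : k ∈ S := by
    obtain ⟨m, hm⟩ := hk
    simp [hSdef, hm, Real.sin_int_mul_pi]
  have hcos : ∀ i ∈ S, c i ≠ 0 := by
    intro i hi h0
    have h1 := Complex.sin_sq_add_cos_sq ((τ * ℓ i : ℝ) : ℂ)
    rw [show Complex.sin ((τ * ℓ i : ℝ) : ℂ) = s i from rfl,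
      show Complex.cos ((τ * ℓ i : ℝ) : ℂ) = c i from rfl, hsin i hi, h0] at h1
    simp at h1
  -- row formulas
  have hrow1 : ∀ (x : Fin N → ℂ) (i : Fin N) (h : (i : ℕ) + 1 < N),
      A.mulVec x i = s i * x i - s ⟨(i : ℕ) + 1, h⟩ * x ⟨(i : ℕ) + 1, h⟩ := by
    intro x i h
    set i' : Fin N := ⟨(i : ℕ) + 1, h⟩ with hi'
    have hne : i ≠ i' := by
      intro he
      have : (i : ℕ) = (i : ℕ) + 1 := congrArg Fin.val he
      omega
    rw [Matrix.mulVec, dotProduct,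
      ← Finset.sum_subset (Finset.subset_univ ({i, i'} : Finset (Fin N)))]
    · rw [Finset.sum_pair hne, hA i i, hA i i']
      have h1 : i' = i ↔ False := by simp [hne.symm]
      have h2 : (i' : ℕ) = (i : ℕ) + 1 := rfl
      simp only [if_pos h, if_pos rfl, h1, if_false, h2, if_true]
      ring
    · intro j' _ hj'
      simp only [Finset.mem_insert, Finset.mem_singleton, not_or] at hj'
      rw [hA i j']
      have h3 : ¬ (j' : ℕ) = (i : ℕ) + 1 := by
        intro hcon
        exact hj'.2 (Fin.ext hcon)
      simp [h, hj'.1, h3]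
  have hrow2 : ∀ (x : Fin N → ℂ) (i : Fin N), ¬ ((i : ℕ) + 1 < N) →
      A.mulVec x i = (∑ j' : Fin N, c j' * x j') + η * (s i * x i) := by
    intro x i h
    have hi : (i : ℕ) + 1 = N := by have := i.isLt; omega
    rw [Matrix.mulVec, dotProduct]
    have hterm : ∀ j' : Fin N, A i j' * x j'
        = c j' * x j' + (if j' = i then η * (s j' * x j') else 0) := by
      intro j'
      rw [hA i j']
      by_cases hji : j' = i
      · subst hji
        rw [if_neg h, if_pos hi, if_pos rfl]
        ring
      · have h4 : ¬ ((j' : ℕ) + 1 = N) := by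
          intro hcon
          exact hji (Fin.ext (by omega))
        rw [if_neg h, if_neg h4, if_neg hji, add_zero]
    rw [Finset.sum_congr rfl (fun j' _ => hterm j'), Finset.sum_add_distrib,
      Finset.sum_ite_eq' Finset.univ i]
    simp
  -- kernel characterization
  have hker : ∀ x : Fin N → ℂ, A.mulVec x = 0 ↔
      ((∀ i, i ∉ S → x i = 0) ∧ (∑ i ∈ S, c i * x i) = 0) := by
    intro x
    constructor
    · intro hx
      have key : ∀ n (hn : n < N),
          s ⟨n, hn⟩ * x ⟨n, hn⟩ = s ⟨0, by omega⟩ * x ⟨0, by omega⟩ := by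
        intro n
        induction n with
        | zero => intro hn; rfl
        | succ m ih =>
          intro hn
          have hm : m < N := by omega
          have h1 : ((⟨m, hm⟩ : Fin N) : ℕ) + 1 < N := hn
          have h2 : A.mulVec x ⟨m, hm⟩ = 0 := by rw [hx]; rfl
          rw [hrow1 x ⟨m, hm⟩ h1, sub_eq_zero] at h2
          rw [show (⟨m + 1, hn⟩ : Fin N) = ⟨((⟨m, hm⟩ : Fin N) : ℕ) + 1, h1⟩ from rfl,
            ← h2]
          exact ih hm
      have hall : ∀ i : Fin N, s i * x i = s ⟨0, by omega⟩ * x ⟨0, by omega⟩ :=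
        fun i => key i.1 i.2
      have h00 : s ⟨0, by omega⟩ * x ⟨0, by omega⟩ = 0 := by
        rw [← hall j, hsin j hjS, zero_mul]
      have hz : ∀ i : Fin N, s i * x i = 0 := fun i => by rw [hall i, h00]
      have hxoff : ∀ i, i ∉ S → x i = 0 := by
        intro i hi
        have hsne : s i ≠ 0 := fun h0 => hi ((hmemS i).mpr h0)
        exact (mul_eq_zero.mp (hz i)).resolve_left hsne
      refine ⟨hxoff, ?_⟩
      have hlastlt : N - 1 < N := by omega
      set last : Fin N := ⟨N - 1, hlastlt⟩ with hlastdef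
      have hlast : ¬ ((last : ℕ) + 1 < N) := by simp [hlastdef]; omega
      have h2 : A.mulVec x last = 0 := by rw [hx]; rfl
      rw [hrow2 x last hlast, hz last, mul_zero, add_zero] at h2
      rw [← h2]
      exact Finset.sum_subset (Finset.subset_univ S)
        (fun i _ hi => by rw [hxoff i hi, mul_zero])
    · rintro ⟨hxoff, hsum⟩
      have hz : ∀ i, s i * x i = 0 := by
        intro i
        by_cases hi : i ∈ S
        · rw [hsin i hi, zero_mul]
        · rw [hxoff i hi, mul_zero]
      funext i
      simp only [Pi.zero_apply]
      by_cases h : (i : ℕ) + 1 < N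
      · rw [hrow1 x i h, hz, hz, sub_zero]
      · rw [hrow2 x i h, hz, mul_zero, add_zero,
          ← Finset.sum_subset (Finset.subset_univ S)
            (fun i _ hi => by rw [hxoff i hi, mul_zero]), hsum]
  -- the linear functional on functions over S
  let f : (S → ℂ) →ₗ[ℂ] ℂ :=
    { toFun := fun y => ∑ i : S, c i.1 * y i
      map_add' := by
        intro a b
        simp [mul_add, Finset.sum_add_distrib]
      map_smul' := by
        intro r a
        simp [Finset.mul_sum, mul_left_comm] }
  have hfker : ∀ y : S → ℂ, f y = ∑ i : S, c i.1 * y i := fun _ => rfl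
  -- linear equivalence between kernels
  have hmem : ∀ x : Fin N → ℂ, x ∈ LinearMap.ker A.mulVecLin ↔ A.mulVec x = 0 := by
    intro x
    rw [LinearMap.mem_ker, Matrix.mulVecLin_apply]
  let e : (LinearMap.ker A.mulVecLin) ≃ₗ[ℂ] (LinearMap.ker f) :=
    { toFun := fun x => ⟨fun i => x.1 i.1, by
        have hx := (hker x.1).mp ((hmem x.1).mp x.2)
        rw [LinearMap.mem_ker, hfker, Finset.sum_coe_sort S (fun i => c i * x.1 i)]
        exact hx.2⟩
      map_add' := fun a b => rfl
      map_smul' := fun r a => rfl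
      invFun := fun y => ⟨fun i => if h : i ∈ S then y.1 ⟨i, h⟩ else 0, by
        rw [hmem]
        apply (hker _).mpr
        refine ⟨fun i hi => dif_neg hi, ?_⟩
        calc ∑ i ∈ S, c i * (if h : i ∈ S then y.1 ⟨i, h⟩ else 0)
            = ∑ i : S, c i.1 * (if h : i.1 ∈ S then y.1 ⟨i.1, h⟩ else 0) :=
              (Finset.sum_coe_sort S _).symm
          _ = ∑ i : S, c i.1 * y.1 i := by
              refine Finset.sum_congr rfl fun i _ => ?_
              rw [dif_pos i.2]
          _ = 0 := y.2⟩
      left_inv := by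
        intro x
        apply Subtype.ext
        funext i
        show (if h : i ∈ S then x.1 i else 0) = x.1 i
        by_cases hi : i ∈ S
        · exact dif_pos hi
        · rw [dif_neg hi]
          exact (((hker x.1).mp ((hmem x.1).mp x.2)).1 i hi).symm
      right_inv := by
        intro y
        apply Subtype.ext
        funext i
        show (if h : (i : Fin N) ∈ S then y.1 ⟨(i : Fin N), h⟩ else 0) = y.1 i
        rw [dif_pos i.2] }
  -- surjectivity of f
  have hfsur : Function.Surjective f := by
    intro z
    refine ⟨fun i => if i = ⟨j, hjS⟩ then z / c j else 0, ?_⟩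
    rw [hfker, Finset.sum_eq_single (⟨j, hjS⟩ : S)]
    · rw [if_pos rfl, mul_comm, div_mul_cancel₀ z (hcos j hjS)]
    · intro b _ hb
      rw [if_neg hb, mul_zero]
    · intro hcon
      exact absurd (Finset.mem_univ _) hcon
  have hrange : LinearMap.range f = ⊤ := LinearMap.range_eq_top.mpr hfsur
  have hrn := LinearMap.finrank_range_add_finrank_ker f
  rw [hrange, finrank_top, Module.finrank_self, Module.finrank_pi, Fintype.card_coe] at hrn
  have hcard : 2 ≤ S.card := by
    have : 1 < S.card := Finset.one_lt_card.mpr ⟨j, hjS, k, hkS, hjk⟩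
    omega
  constructor
  · -- determinant vanishes
    rw [← Matrix.exists_mulVec_eq_zero_iff]
    refine ⟨fun i => if i = j then c k else if i = k then -(c j) else 0, ?_, ?_⟩
    · intro hcon
      have := congrFun hcon j
      rw [if_pos rfl] at this
      exact hcos k hkS this
    · apply (hker _).mpr
      constructor
      · intro i hi
        rw [if_neg (fun h => hi (by rw [h]; exact hjS)),
          if_neg (fun h => hi (by rw [h]; exact hkS))]
      · rw [← Finset.sum_subset (show ({j, k} : Finset (Fin N)) ⊆ S by
            intro i hi
            simp only [Finset.mem_insert, Finset.mem_singleton] at hi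
            rcases hi with h | h
            · exact h ▸ hjS
            · exact h ▸ hkS)]
        · rw [Finset.sum_pair hjk, if_pos rfl, if_neg (Ne.symm hjk), if_pos rfl]
          ring
        · intro i _ hi
          simp only [Finset.mem_insert, Finset.mem_singleton, not_or] at hi
          rw [if_neg hi.1, if_neg hi.2, mul_zero]
  · rw [LinearEquiv.finrank_eq e]
    omega
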